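/- For any prime p and nonnegative integers i, j, the quotient (p^i·j)! / (j!·(p^i!)^j) is an integer congruent to 1 modulo p. -/

import Mathlib

open Nat Finset

private lemma aux_pow_sub_one_div {p : ℕ} (hp : p.Prime) {t i : ℕ} (ht : t ≤ i) :
    (p ^ i - 1) / p ^ t = p ^ (i - t) - 1 := by
  have h1 : 1 ≤ p ^ (i - t) := Nat.one_le_pow _ _ hp.pos
  have h2 : 1 ≤ p ^ t := Nat.one_le_pow _ _ hp.pos
  have hexp : p ^ t * p ^ (i - t) = p ^ i := by rw [← pow_add]; congr 1; omega
  have hms : p ^ t * (p ^ (i - t) - 1) + p ^ t = p ^ i := by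
    have h3 : (p ^ (i - t) - 1) + 1 = p ^ (i - t) := by omega
    calc p ^ t * (p ^ (i - t) - 1) + p ^ t = p ^ t * ((p ^ (i - t) - 1) + 1) := by ring
      _ = p ^ i := by rw [h3, hexp]
  have key : p ^ i - 1 = p ^ t * (p ^ (i - t) - 1) + (p ^ t - 1) := by omega
  rw [key, Nat.mul_add_div (by omega), Nat.div_eq_of_lt (by omega), add_zero]

private lemma aux_choose_one {p : ℕ} (hp : p.Prime) (i k : ℕ) :
    Nat.choose (k * p ^ i + (p ^ i - 1)) (p ^ i - 1) ≡ 1 [MOD p] := by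
  haveI : Fact p.Prime := ⟨hp⟩
  have hpi : 0 < p ^ i := Nat.pow_pos hp.pos
  have h := Choose.choose_modEq_choose_mul_prod_range_choose
    (p := p) (n := k * p ^ i + (p ^ i - 1)) (k := p ^ i - 1) i
  have hdivn : (k * p ^ i + (p ^ i - 1)) / p ^ i = k := by
    rw [add_comm, Nat.add_mul_div_right _ _ hpi, Nat.div_eq_of_lt (by omega), zero_add]
  have hdivk : (p ^ i - 1) / p ^ i = 0 := Nat.div_eq_of_lt (by omega)
  have hterm : ∀ t ∈ range i,
      Nat.choose ((k * p ^ i + (p ^ i - 1)) / p ^ t % p) ((p ^ i - 1) / p ^ t % p) = 1 := by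
    intro t ht
    rw [mem_range] at ht
    have hpt : 0 < p ^ t := Nat.pow_pos hp.pos
    have hd1 : (p ^ i - 1) / p ^ t = p ^ (i - t) - 1 := aux_pow_sub_one_div hp ht.le
    have hmul : k * p ^ i = (k * p ^ (i - t)) * p ^ t := by
      rw [mul_assoc, ← pow_add]; congr 2; omega
    have hd2 : (k * p ^ i + (p ^ i - 1)) / p ^ t = k * p ^ (i - t) + (p ^ (i - t) - 1) := by
      rw [hmul, add_comm, Nat.add_mul_div_right _ _ hpt, hd1, add_comm]
    have hmod : (p ^ (i - t) - 1) % p = p - 1 := by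
      have hpow : p ^ (i - t) = p * p ^ (i - t - 1) := by
        conv_lhs => rw [show i - t = (i - t - 1) + 1 by omega]
        rw [_root_.pow_succ']
      have h1 : 1 ≤ p ^ (i - t - 1) := Nat.one_le_pow _ _ hp.pos
      have hms2 : p * (p ^ (i - t - 1) - 1) + p = p * p ^ (i - t - 1) := by
        have h3 : (p ^ (i - t - 1) - 1) + 1 = p ^ (i - t - 1) := by omega
        calc p * (p ^ (i - t - 1) - 1) + p = p * ((p ^ (i - t - 1) - 1) + 1) := by ring
          _ = p * p ^ (i - t - 1) := by rw [h3]
      have hp2 := hp.two_le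
      have hrw : p ^ (i - t) - 1 = p * (p ^ (i - t - 1) - 1) + (p - 1) := by omega
      rw [hrw, Nat.mul_add_mod, Nat.mod_eq_of_lt (by omega)]
    have hmodk : (k * p ^ (i - t)) % p = 0 := by
      have hdvd : p ∣ k * p ^ (i - t) :=
        Dvd.dvd.mul_left (dvd_pow_self p (by omega : i - t ≠ 0)) k
      exact Nat.mod_eq_zero_of_dvd hdvd
    rw [hd2, hd1, Nat.add_mod, hmodk, hmod, zero_add,
      Nat.mod_eq_of_lt (by have := hp.two_le; omega), Nat.choose_self]
  have hnat : Nat.choose (k * p ^ i + (p ^ i - 1)) (p ^ i - 1) ≡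
      Nat.choose ((k * p ^ i + (p ^ i - 1)) / p ^ i) ((p ^ i - 1) / p ^ i) *
        ∏ t ∈ range i,
          Nat.choose ((k * p ^ i + (p ^ i - 1)) / p ^ t % p)
            ((p ^ i - 1) / p ^ t % p) [MOD p] := by
    rw [← Int.natCast_modEq_iff]; exact_mod_cast h
  rwa [hdivk, Nat.choose_zero_right, one_mul, Finset.prod_eq_one hterm] at hnat

private lemma aux_bell_modeq {p : ℕ} (hp : p.Prime) (i j : ℕ) :
    Nat.uniformBell j (p ^ i) ≡ 1 [MOD p] := by
  have hpi : 1 ≤ p ^ i := Nat.one_le_pow _ _ hp.pos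
  rw [uniformBell_eq]
  induction j with
  | zero => simp [Nat.ModEq.refl]
  | succ n ih =>
      rw [Finset.prod_range_succ]
      have h1 : n * p ^ i + p ^ i - 1 = n * p ^ i + (p ^ i - 1) := by omega
      rw [h1]
      calc (∏ t ∈ range n, Nat.choose (t * p ^ i + p ^ i - 1) (p ^ i - 1)) *
            Nat.choose (n * p ^ i + (p ^ i - 1)) (p ^ i - 1)
          ≡ 1 * 1 [MOD p] := Nat.ModEq.mul ih (aux_choose_one hp i n)
        _ = 1 := one_mul 1

theorem stmt0 (p i j : ℕ) (hp : p.Prime) :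
    (Nat.factorial j * Nat.factorial (p ^ i) ^ j) ∣ Nat.factorial (p ^ i * j) ∧
    Nat.factorial (p ^ i * j) / (Nat.factorial j * Nat.factorial (p ^ i) ^ j) ≡ 1 [MOD p] := by
  have hpi : p ^ i ≠ 0 := (Nat.pow_pos hp.pos).ne'
  have key := Nat.uniformBell_mul_eq j hpi
  have heq : Nat.uniformBell j (p ^ i) * (Nat.factorial j * Nat.factorial (p ^ i) ^ j)
      = Nat.factorial (p ^ i * j) := by
    rw [mul_comm (p ^ i) j, ← key]; ring
  constructor
  · exact Dvd.intro _ (by rw [mul_comm]; exact heq)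
  · have hpos : 0 < Nat.factorial j * Nat.factorial (p ^ i) ^ j :=
      Nat.mul_pos j.factorial_pos (pow_pos (Nat.factorial_pos _) j)
    have hdiv : Nat.factorial (p ^ i * j) / (Nat.factorial j * Nat.factorial (p ^ i) ^ j)
        = Nat.uniformBell j (p ^ i) := by
      rw [← heq, Nat.mul_div_cancel _ hpos]
    rw [hdiv]
    exact aux_bell_modeq hp i j
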